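/- In the hierarchical setup, assume that d(x, g_l(x)) ≤ 2^l for all x ∈ X, that d(g_i(x), g_{i+1}(x)) ≤ 2^{i+1} for all x ∈ X and all l ≤ i < r, that g_r is a constant map, and that 2^l ≤ ε/8 for some ε > 0. Then for all probability distributions p and q on X with W_d(p,q) ≥ ε, there exists an integer i with l ≤ i ≤ r−1 such that ‖g_i♯p − g_i♯q‖₁ ≥ (3ε/4) / ((r−l)·2^{i+1}). -/

import Mathlib

/-- `p` is a probability distribution on the finite set `X`. -/
def IsProb {X : Type*} [Fintype X] (p : X → ℝ) : Prop :=
  (∀ x, 0 ≤ p x) ∧ ∑ x, p x = 1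

/-- `M` is a coupling of `p` and `q`: a probability distribution on `X × X`
whose first marginal is `p` and second marginal is `q`. -/
def IsCoupling {X : Type*} [Fintype X] (p q : X → ℝ) (M : X × X → ℝ) : Prop :=
  (∀ z, 0 ≤ M z) ∧ (∀ x, ∑ y, M (x, y) = p x) ∧ (∀ y, ∑ x, M (x, y) = q y)

/-- The Wasserstein (transportation) distance between `p` and `q` with respect to the
cost function `c`: the infimum, over all couplings `M` of `p` and `q`, of the expected cost. -/
noncomputable def wassersteinDist {X : Type*} [Fintype X] (c : X → X → ℝ) (p q : X → ℝ) : ℝ :=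
  sInf {w : ℝ | ∃ M : X × X → ℝ, IsCoupling p q M ∧ w = ∑ z : X × X, M z * c z.1 z.2}

/-- The `L₁` distance between two distributions on a finite set. -/
noncomputable def l1Dist {X : Type*} [Fintype X] (p q : X → ℝ) : ℝ :=
  ∑ x, |p x - q x|

/-- The pushforward of the distribution `p` along the map `g`. -/
noncomputable def pushforward {X : Type*} [Fintype X] [DecidableEq X]
    (g : X → X) (p : X → ℝ) : X → ℝ :=
  fun z => ∑ x ∈ Finset.univ.filter (fun x => g x = z), p x

/-- The tree metric associated with the hierarchical family of maps `g i`, levels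
`l ≤ i ≤ r`: `d_T x x = 0` and, for `x ≠ y`,
`d_T x y = 2^(l+1) + ∑_{i=l}^{r-1} 2^(i+2) · 1[g i x ≠ g i y]`. -/
noncomputable def treeDist {X : Type*} [DecidableEq X] (l r : ℤ) (g : ℤ → X → X)
    (x y : X) : ℝ :=
  if x = y then 0
  else (2 : ℝ) ^ (l + 1) +
    ∑ i ∈ Finset.Icc l (r - 1), if g i x ≠ g i y then (2 : ℝ) ^ (i + 2) else 0

lemma push_nonneg {X : Type*} [Fintype X] [DecidableEq X] (g : X → X) {u : X → ℝ}
    (hu : ∀ x, 0 ≤ u x) (z : X) : 0 ≤ pushforward g u z :=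
  Finset.sum_nonneg fun x _ => hu x

lemma sum_mul_comp {X : Type*} [Fintype X] [DecidableEq X] (g : X → X) (u : X → ℝ) (F : X → ℝ) :
    ∑ x, u x * F (g x) = ∑ z, pushforward g u z * F z := by
  rw [← Finset.sum_fiberwise Finset.univ g (fun x => u x * F (g x))]
  refine Finset.sum_congr rfl fun z _ => ?_
  rw [pushforward, Finset.sum_mul]
  refine Finset.sum_congr rfl fun x hx => ?_
  rw [Finset.mem_filter] at hx
  rw [hx.2]

lemma sum_push {X : Type*} [Fintype X] [DecidableEq X] (g : X → X) (u : X → ℝ) :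
    ∑ z, pushforward g u z = ∑ x, u x := by
  have := sum_mul_comp g u (fun _ => 1)
  simpa using this.symm

lemma push_as_if {X : Type*} [Fintype X] [DecidableEq X] (g : X → X) (u : X → ℝ) (z : X) :
    pushforward g u z = ∑ x, if g x = z then u x else 0 := by
  rw [pushforward, Finset.sum_filter]

lemma g_propagate {X : Type*} (l r : ℤ) (g : ℤ → X → X)
    (hstep : ∀ i : ℤ, l ≤ i → i < r → ∀ x y : X, g i x = g i y → g (i + 1) x = g (i + 1) y)
    (i : ℤ) (hli : l ≤ i) :
    ∀ j : ℤ, i ≤ j → j ≤ r → ∀ x y : X, g i x = g i y → g j x = g j y := by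
  have main : ∀ n : ℕ, ∀ j : ℤ, j = i + n → j ≤ r → ∀ x y : X, g i x = g i y → g j x = g j y := by
    intro n
    induction n with
    | zero => intro j hj _ x y h; simp at hj; subst hj; exact h
    | succ n IHn =>
      intro j hj hjr x y h
      have hj' : j = (i + n) + 1 := by push_cast at hj ⊢; omega
      subst hj'
      exact hstep (i + n) (by omega) (by omega) x y (IHn (i + n) rfl (by omega) x y h)
  intro j hj hjr
  exact main (j - i).toNat j (by omega) hjr

lemma key_coupling {X : Type*} [MetricSpace X] [Fintype X] [DecidableEq X]
    (l r : ℤ) (g : ℤ → X → X)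
    (hstep : ∀ i : ℤ, l ≤ i → i < r → ∀ x y : X, g i x = g i y → g (i + 1) x = g (i + 1) y)
    (hconst : ∀ x y : X, g r x = g r y)
    (hds : ∀ i : ℤ, l ≤ i → i < r → ∀ x : X, dist (g i x) (g (i + 1) x) ≤ (2 : ℝ) ^ (i + 1)) :
    ∀ k : ℕ, ∀ i : ℤ, i = r - k → l ≤ i →
    ∀ u v : X → ℝ, (∀ x, 0 ≤ u x) → (∀ x, 0 ≤ v x) → (∑ x, u x) = (∑ x, v x) →
    ∃ M : X × X → ℝ, (∀ z, 0 ≤ M z) ∧ (∀ x, ∑ y, M (x, y) = u x) ∧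
      (∀ y, ∑ x, M (x, y) = v y) ∧
      ∑ zz : X × X, M zz * dist (g i zz.1) (g i zz.2) ≤
        ∑ j ∈ Finset.Icc i (r - 1), (2 : ℝ) ^ (j + 1) *
          l1Dist (pushforward (g j) u) (pushforward (g j) v) := by
  intro k
  induction k with
  | zero =>
    intro i hi _ u v hu hv hsum
    have hir : i = r := by simpa using hi
    subst hir
    have hIcc : Finset.Icc i (i - 1) = ∅ := Finset.Icc_eq_empty (by omega)
    by_cases hS : ∑ x, u x = 0
    · refine ⟨fun _ => 0, fun _ => le_rfl, ?_, ?_, ?_⟩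
      · intro x
        have h0 : ∀ x, u x = 0 := by
          intro x
          have := (Finset.sum_eq_zero_iff_of_nonneg (fun x _ => hu x)).mp hS
          exact this x (Finset.mem_univ x)
        simp [h0 x]
      · intro y
        have h0 : ∀ y, v y = 0 := by
          intro y
          have := (Finset.sum_eq_zero_iff_of_nonneg (fun x _ => hv x)).mp (hsum ▸ hS)
          exact this y (Finset.mem_univ y)
        simp [h0 y]
      · simp [hIcc]
    · have hSpos : (0:ℝ) < ∑ x, u x :=
        lt_of_le_of_ne (Finset.sum_nonneg fun x _ => hu x) (Ne.symm hS)
      refine ⟨fun zz => u zz.1 * v zz.2 / (∑ x, u x), ?_, ?_, ?_, ?_⟩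
      · intro zz
        exact div_nonneg (mul_nonneg (hu _) (hv _)) hSpos.le
      · intro x
        have h1 : (∑ y, u x * v y / (∑ x, u x)) = (∑ y, v y) * (u x / (∑ x, u x)) := by
          rw [Finset.sum_mul]
          exact Finset.sum_congr rfl fun y _ => by ring
        rw [h1, ← hsum]
        field_simp
      · intro y
        have h1 : (∑ x', u x' * v y / (∑ x, u x)) = (∑ x, u x) * (v y / (∑ x, u x)) := by
          rw [Finset.sum_mul]
          exact Finset.sum_congr rfl fun x' _ => by ring
        rw [h1]
        field_simp
      · rw [hIcc]
        simp only [Finset.sum_empty]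
        refine le_of_eq (Finset.sum_eq_zero fun zz _ => ?_)
        rw [hconst zz.1 zz.2, dist_self, mul_zero]
  | succ k IH =>
    intro i hi hli u v hu hv hsum
    have hir : i < r := by
      have h : ((k + 1 : ℕ) : ℤ) = (k : ℤ) + 1 := by push_cast; ring
      omega
    have hi1 : i + 1 = r - (k : ℤ) := by
      have h : ((k + 1 : ℕ) : ℤ) = (k : ℤ) + 1 := by push_cast; ring
      omega
    have hli1 : l ≤ i + 1 := by omega
    set A : X → ℝ := pushforward (g i) u with hAdef
    set B : X → ℝ := pushforward (g i) v with hBdef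
    set m : X → ℝ := fun z => min (A z) (B z) with hmdef
    have hA0 : ∀ z, 0 ≤ A z := fun z => push_nonneg _ hu z
    have hB0 : ∀ z, 0 ≤ B z := fun z => push_nonneg _ hv z
    have hm0 : ∀ z, 0 ≤ m z := fun z => le_min (hA0 z) (hB0 z)
    have hmA : ∀ z, m z ≤ A z := fun z => min_le_left _ _
    have hmB : ∀ z, m z ≤ B z := fun z => min_le_right _ _
    have hAzero : ∀ z, A z = 0 → m z = 0 := fun z h => le_antisymm (h ▸ hmA z) (hm0 z)
    have hBzero : ∀ z, B z = 0 → m z = 0 := fun z h => le_antisymm (h ▸ hmB z) (hm0 z)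
    have hratA : ∀ z, m z / A z ≤ 1 := by
      intro z
      rcases eq_or_lt_of_le (hA0 z) with h | h
      · rw [← h]; simp
      · rw [div_le_one h]; exact hmA z
    have hratB : ∀ z, m z / B z ≤ 1 := by
      intro z
      rcases eq_or_lt_of_le (hB0 z) with h | h
      · rw [← h]; simp
      · rw [div_le_one h]; exact hmB z
    set u' : X → ℝ := fun x => u x * (1 - m (g i x) / A (g i x)) with hu'def
    set v' : X → ℝ := fun y => v y * (1 - m (g i y) / B (g i y)) with hv'def
    have hu' : ∀ x, 0 ≤ u' x := fun x =>
      mul_nonneg (hu x) (by linarith [hratA (g i x)])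
    have hv' : ∀ y, 0 ≤ v' y := fun y =>
      mul_nonneg (hv y) (by linarith [hratB (g i y)])
    have hAm : ∀ z, A z * (m z / A z) = m z := by
      intro z
      rcases eq_or_ne (A z) 0 with h | h
      · rw [h, hAzero z h]; simp
      · field_simp
    have hBm : ∀ z, B z * (m z / B z) = m z := by
      intro z
      rcases eq_or_ne (B z) 0 with h | h
      · rw [h, hBzero z h]; simp
      · field_simp
    have hsum_u' : ∑ x, u' x = (∑ x, u x) - ∑ z, m z := by
      have h1 : ∑ x, u' x = (∑ x, u x) - ∑ x, u x * (m (g i x) / A (g i x)) := by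
        rw [← Finset.sum_sub_distrib]
        exact Finset.sum_congr rfl fun x _ => by simp only [hu'def]; ring
      rw [h1, sum_mul_comp (g i) u (fun z => m z / A z), ← hAdef]
      congr 1
      exact Finset.sum_congr rfl fun z _ => hAm z
    have hsum_v' : ∑ y, v' y = (∑ y, v y) - ∑ z, m z := by
      have h1 : ∑ y, v' y = (∑ y, v y) - ∑ y, v y * (m (g i y) / B (g i y)) := by
        rw [← Finset.sum_sub_distrib]
        exact Finset.sum_congr rfl fun y _ => by simp only [hv'def]; ring
      rw [h1, sum_mul_comp (g i) v (fun z => m z / B z), ← hBdef]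
      congr 1
      exact Finset.sum_congr rfl fun z _ => hBm z
    have hsum' : ∑ x, u' x = ∑ x, v' x := by rw [hsum_u', hsum_v', hsum]
    set M₀ : X × X → ℝ := fun zz =>
      if g i zz.1 = g i zz.2 then
        u zz.1 * v zz.2 * (m (g i zz.1) / (A (g i zz.1) * B (g i zz.1)))
      else 0 with hM₀def
    have hM₀0 : ∀ zz, 0 ≤ M₀ zz := by
      intro zz
      simp only [hM₀def]
      split
      · exact mul_nonneg (mul_nonneg (hu _) (hv _))
          (div_nonneg (hm0 _) (mul_nonneg (hA0 _) (hB0 _)))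
      · exact le_rfl
    have hρB : ∀ z, m z / (A z * B z) * B z = m z / A z := by
      intro z
      rcases eq_or_ne (B z) 0 with h | h
      · rw [h, hBzero z h]; simp
      · rw [← div_div, div_mul_cancel₀ _ h]
    have hρA : ∀ z, m z / (A z * B z) * A z = m z / B z := by
      intro z
      rcases eq_or_ne (A z) 0 with h | h
      · rw [h, hAzero z h]; simp
      · rw [mul_comm (A z) (B z), ← div_div, div_mul_cancel₀ _ h]
    have hM₀fst : ∀ x, ∑ y, M₀ (x, y) = u x * (m (g i x) / A (g i x)) := by
      intro x
      have h1 : ∀ y, M₀ (x, y) =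
          (u x * (m (g i x) / (A (g i x) * B (g i x)))) *
            (if g i y = g i x then v y else 0) := by
        intro y
        simp only [hM₀def]
        by_cases h : g i x = g i y
        · rw [if_pos h, if_pos h.symm]; ring
        · rw [if_neg h, if_neg (fun hh => h hh.symm), mul_zero]
      calc ∑ y, M₀ (x, y)
          = ∑ y, (u x * (m (g i x) / (A (g i x) * B (g i x)))) *
              (if g i y = g i x then v y else 0) := Finset.sum_congr rfl fun y _ => h1 y
        _ = (u x * (m (g i x) / (A (g i x) * B (g i x)))) * B (g i x) := by
            rw [← Finset.mul_sum, ← push_as_if, ← hBdef]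
        _ = u x * (m (g i x) / A (g i x)) := by rw [mul_assoc, hρB]
    have hM₀snd : ∀ y, ∑ x, M₀ (x, y) = v y * (m (g i y) / B (g i y)) := by
      intro y
      have h1 : ∀ x, M₀ (x, y) =
          (v y * (m (g i y) / (A (g i y) * B (g i y)))) *
            (if g i x = g i y then u x else 0) := by
        intro x
        simp only [hM₀def]
        by_cases h : g i x = g i y
        · rw [if_pos h, if_pos h, h]; ring
        · rw [if_neg h, if_neg h, mul_zero]
      calc ∑ x, M₀ (x, y)
          = ∑ x, (v y * (m (g i y) / (A (g i y) * B (g i y)))) *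
              (if g i x = g i y then u x else 0) := Finset.sum_congr rfl fun x _ => h1 x
        _ = (v y * (m (g i y) / (A (g i y) * B (g i y)))) * A (g i y) := by
            rw [← Finset.mul_sum, ← push_as_if, ← hAdef]
        _ = v y * (m (g i y) / B (g i y)) := by rw [mul_assoc, hρA]
    obtain ⟨E, hE0, hE1, hE2, hEcost⟩ := IH (i + 1) hi1 hli1 u' v' hu' hv' hsum'
    have hEsum : ∑ zz : X × X, E zz = ∑ x, u' x := by
      rw [Fintype.sum_prod_type]
      exact Finset.sum_congr rfl fun x _ => hE1 x
    refine ⟨fun zz => M₀ zz + E zz, ?_, ?_, ?_, ?_⟩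
    · intro zz; exact add_nonneg (hM₀0 zz) (hE0 zz)
    · intro x
      rw [Finset.sum_add_distrib, hM₀fst x, hE1 x]
      simp only [hu'def]
      ring
    · intro y
      rw [Finset.sum_add_distrib, hM₀snd y, hE2 y]
      simp only [hv'def]
      ring
    -- cost bound
    have hM₀cost : ∑ zz : X × X, M₀ zz * dist (g i zz.1) (g i zz.2) = 0 := by
      refine Finset.sum_eq_zero fun zz _ => ?_
      by_cases h : g i zz.1 = g i zz.2
      · rw [h, dist_self, mul_zero]
      · simp only [hM₀def, if_neg h, zero_mul]
    have hEd : ∑ zz : X × X, E zz * dist (g i zz.1) (g i zz.2) ≤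
        ((2:ℝ)^(i+1) + (2:ℝ)^(i+1)) * (∑ zz : X × X, E zz) +
        ∑ zz : X × X, E zz * dist (g (i+1) zz.1) (g (i+1) zz.2) := by
      have h1 : ∀ zz : X × X, E zz * dist (g i zz.1) (g i zz.2) ≤
          E zz * (((2:ℝ)^(i+1) + (2:ℝ)^(i+1)) + dist (g (i+1) zz.1) (g (i+1) zz.2)) := by
        intro zz
        refine mul_le_mul_of_nonneg_left ?_ (hE0 zz)
        have ht := dist_triangle4 (g i zz.1) (g (i+1) zz.1) (g (i+1) zz.2) (g i zz.2)
        have h2 := hds i hli hir zz.1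
        have h3 := hds i hli hir zz.2
        rw [dist_comm (g (i+1) zz.2) (g i zz.2)] at ht
        linarith
      calc ∑ zz : X × X, E zz * dist (g i zz.1) (g i zz.2)
          ≤ ∑ zz : X × X, E zz *
              (((2:ℝ)^(i+1) + (2:ℝ)^(i+1)) + dist (g (i+1) zz.1) (g (i+1) zz.2)) :=
            Finset.sum_le_sum fun zz _ => h1 zz
        _ = ((2:ℝ)^(i+1) + (2:ℝ)^(i+1)) * (∑ zz : X × X, E zz) +
            ∑ zz : X × X, E zz * dist (g (i+1) zz.1) (g (i+1) zz.2) := by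
            rw [Finset.mul_sum, ← Finset.sum_add_distrib]
            exact Finset.sum_congr rfl fun zz _ => by ring
    have hprop := g_propagate l r g hstep i hli
    have hinv : ∀ j : ℤ, i ≤ j → j ≤ r → ∀ z : X,
        pushforward (g j) u z - pushforward (g j) u' z =
        pushforward (g j) v z - pushforward (g j) v' z := by
      intro j hij hjr z
      have hgij := hprop j hij hjr
      have hLu : pushforward (g j) u z - pushforward (g j) u' z =
          ∑ zz : X × X, (if g j zz.1 = z then M₀ zz else 0) := by
        rw [push_as_if, push_as_if, ← Finset.sum_sub_distrib, Fintype.sum_prod_type]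
        refine Finset.sum_congr rfl fun x _ => ?_
        by_cases h : g j x = z
        · simp only [if_pos h]
          rw [hM₀fst x]
          simp only [hu'def]
          ring
        · simp [h]
      have hLv : pushforward (g j) v z - pushforward (g j) v' z =
          ∑ zz : X × X, (if g j zz.2 = z then M₀ zz else 0) := by
        have hsw : (∑ zz : X × X, (if g j zz.2 = z then M₀ zz else 0)) =
            ∑ y, ∑ x, (if g j y = z then M₀ (x, y) else 0) := by
          rw [Fintype.sum_prod_type]
          exact Finset.sum_comm
        rw [push_as_if, push_as_if, ← Finset.sum_sub_distrib, hsw]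
        refine Finset.sum_congr rfl fun y _ => ?_
        by_cases h : g j y = z
        · simp only [if_pos h]
          rw [hM₀snd y]
          simp only [hv'def]
          ring
        · simp [h]
      rw [hLu, hLv]
      refine Finset.sum_congr rfl fun zz _ => ?_
      by_cases h : g i zz.1 = g i zz.2
      · rw [hgij zz.1 zz.2 h]
      · have h0 : M₀ zz = 0 := by simp only [hM₀def, if_neg h]
        simp [h0]
    have hl1inv : ∀ j ∈ Finset.Icc (i+1) (r-1),
        l1Dist (pushforward (g j) u') (pushforward (g j) v') =
        l1Dist (pushforward (g j) u) (pushforward (g j) v) := by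
      intro j hj
      rw [Finset.mem_Icc] at hj
      have h := hinv j (by omega) (by omega)
      unfold l1Dist
      refine Finset.sum_congr rfl fun z _ => ?_
      have h2 : pushforward (g j) u' z - pushforward (g j) v' z =
          pushforward (g j) u z - pushforward (g j) v z := by
        have := h z
        linarith
      rw [h2]
    have hEcost2 : ∑ zz : X × X, E zz * dist (g (i+1) zz.1) (g (i+1) zz.2) ≤
        ∑ j ∈ Finset.Icc (i+1) (r-1), (2:ℝ)^(j+1) *
          l1Dist (pushforward (g j) u) (pushforward (g j) v) := by
      refine le_trans hEcost (le_of_eq ?_)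
      exact Finset.sum_congr rfl fun j hj => by rw [hl1inv j hj]
    have hl1AB : l1Dist (pushforward (g i) u) (pushforward (g i) v) =
        2 * ((∑ x, u x) - ∑ z, m z) := by
      unfold l1Dist
      rw [← hAdef, ← hBdef]
      have habs : ∀ z : X, |A z - B z| = (A z + B z) - 2 * m z := by
        intro z
        rcases le_total (A z) (B z) with h | h
        · rw [abs_of_nonpos (by linarith)]
          have : m z = A z := by simp only [hmdef]; exact min_eq_left h
          rw [this]; ring
        · rw [abs_of_nonneg (by linarith)]
          have : m z = B z := by simp only [hmdef]; exact min_eq_right h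
          rw [this]; ring
      rw [Finset.sum_congr rfl fun z _ => habs z]
      have hsA : ∑ z, ((A z + B z) - 2 * m z) =
          (∑ z, A z) + (∑ z, B z) - 2 * ∑ z, m z := by
        rw [Finset.sum_sub_distrib, Finset.sum_add_distrib, Finset.mul_sum]
      rw [hsA, hAdef, hBdef, sum_push, sum_push, ← hsum]
      ring
    have hterm : ((2:ℝ)^(i+1) + (2:ℝ)^(i+1)) * (∑ zz : X × X, E zz) =
        (2:ℝ)^(i+1) * l1Dist (pushforward (g i) u) (pushforward (g i) v) := by
      rw [hEsum, hsum_u', hl1AB]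
      ring
    have hsplit : Finset.Icc i (r-1) = insert i (Finset.Icc (i+1) (r-1)) := by
      ext a
      simp only [Finset.mem_Icc, Finset.mem_insert]
      omega
    have hnotmem : i ∉ Finset.Icc (i+1) (r-1) := by
      simp only [Finset.mem_Icc]
      omega
    have heq : ∑ zz : X × X, (M₀ zz + E zz) * dist (g i zz.1) (g i zz.2) =
        ∑ zz : X × X, M₀ zz * dist (g i zz.1) (g i zz.2) +
        ∑ zz : X × X, E zz * dist (g i zz.1) (g i zz.2) := by
      rw [← Finset.sum_add_distrib]
      exact Finset.sum_congr rfl fun zz _ => by ring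
    rw [heq, hM₀cost, zero_add, hsplit, Finset.sum_insert hnotmem]
    refine le_trans hEd ?_
    rw [hterm]
    exact add_le_add le_rfl hEcost2

/-- Hierarchical setup: if `d(x, g_l(x)) ≤ 2^l`, `d(g_i(x), g_{i+1}(x)) ≤ 2^(i+1)` for
`l ≤ i < r`, `g_r` is constant, and `2^l ≤ ε/8`, then whenever `W_d(p,q) ≥ ε` there is a
level `l ≤ i ≤ r − 1` with `‖g_i♯p − g_i♯q‖₁ ≥ (3ε/4) / ((r − l)·2^(i+1))`. -/
theorem exists_level_with_large_l1
    {X : Type*} [MetricSpace X] [Fintype X] [Nonempty X] [DecidableEq X]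
    (l r : ℤ) (hlr : l ≤ r) (π g : ℤ → X → X)
    (hgl : g l = π l)
    (hgs : ∀ i : ℤ, l ≤ i → i < r → g (i + 1) = π (i + 1) ∘ g i)
    (hdl : ∀ x : X, dist x (g l x) ≤ (2 : ℝ) ^ l)
    (hds : ∀ i : ℤ, l ≤ i → i < r → ∀ x : X, dist (g i x) (g (i + 1) x) ≤ (2 : ℝ) ^ (i + 1))
    (hconst : ∃ z : X, ∀ x : X, g r x = z)
    {ε : ℝ} (hε : 0 < ε) (hl : (2 : ℝ) ^ l ≤ ε / 8)
    (p q : X → ℝ) (hp : IsProb p) (hq : IsProb q)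
    (hW : ε ≤ wassersteinDist (fun x y => dist x y) p q) :
    ∃ i : ℤ, l ≤ i ∧ i ≤ r - 1 ∧
      3 * ε / 4 / (((r - l : ℤ) : ℝ) * (2 : ℝ) ^ (i + 1)) ≤
        l1Dist (pushforward (g i) p) (pushforward (g i) q) := by
  by_contra hcon
  push_neg at hcon
  have hstep : ∀ i : ℤ, l ≤ i → i < r → ∀ x y : X,
      g i x = g i y → g (i + 1) x = g (i + 1) y := by
    intro i h1 h2 x y hxy
    rw [hgs i h1 h2]
    simp only [Function.comp_apply, hxy]
  obtain ⟨z₀, hz₀⟩ := hconst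
  have hconst' : ∀ x y : X, g r x = g r y := fun x y => by rw [hz₀ x, hz₀ y]
  have hk : l = r - ((r - l).toNat : ℤ) := by
    rw [Int.toNat_of_nonneg (by omega)]; ring
  obtain ⟨M, hM0, hM1, hM2, hMcost⟩ :=
    key_coupling l r g hstep hconst' hds (r - l).toNat l hk le_rfl p q hp.1 hq.1
      (by rw [hp.2, hq.2])
  have hMsum : ∑ zz : X × X, M zz = 1 := by
    rw [Fintype.sum_prod_type, Finset.sum_congr rfl fun x _ => hM1 x]
    exact hp.2
  set cost := ∑ zz : X × X, M zz * dist zz.1 zz.2 with hcostdef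
  have hWle : wassersteinDist (fun x y => dist x y) p q ≤ cost := by
    unfold wassersteinDist
    apply csInf_le
    · refine ⟨0, fun w hw => ?_⟩
      obtain ⟨M', hM', rfl⟩ := hw
      exact Finset.sum_nonneg fun zz _ => mul_nonneg (hM'.1 zz) dist_nonneg
    · exact ⟨M, ⟨hM0, hM1, hM2⟩, rfl⟩
  have hcost1 : cost ≤ ((2:ℝ)^l + (2:ℝ)^l) * (∑ zz : X × X, M zz) +
      ∑ zz : X × X, M zz * dist (g l zz.1) (g l zz.2) := by
    rw [hcostdef]
    calc ∑ zz : X × X, M zz * dist zz.1 zz.2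
        ≤ ∑ zz : X × X, M zz * (((2:ℝ)^l + (2:ℝ)^l) + dist (g l zz.1) (g l zz.2)) := by
          refine Finset.sum_le_sum fun zz _ => ?_
          refine mul_le_mul_of_nonneg_left ?_ (hM0 zz)
          have ht := dist_triangle4 zz.1 (g l zz.1) (g l zz.2) zz.2
          have h1 := hdl zz.1
          have h2 := hdl zz.2
          rw [dist_comm (g l zz.2) zz.2] at ht
          linarith
      _ = _ := by
          rw [Finset.mul_sum, ← Finset.sum_add_distrib]
          exact Finset.sum_congr rfl fun zz _ => by ring
  rw [hMsum, mul_one] at hcost1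
  have hfin : ε ≤ cost := le_trans hW hWle
  rcases eq_or_lt_of_le hlr with hrl | hrl
  · have hIcc : Finset.Icc l (r-1) = ∅ := Finset.Icc_eq_empty (by omega)
    rw [hIcc, Finset.sum_empty] at hMcost
    linarith
  · have hlt : ∑ j ∈ Finset.Icc l (r-1), (2:ℝ)^(j+1) *
        l1Dist (pushforward (g j) p) (pushforward (g j) q) < 3 * ε / 4 := by
      have hne : (Finset.Icc l (r-1)).Nonempty := ⟨l, by rw [Finset.mem_Icc]; omega⟩
      have hstrict : ∀ j ∈ Finset.Icc l (r-1),
          (2:ℝ)^(j+1) * l1Dist (pushforward (g j) p) (pushforward (g j) q) <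
          3 * ε / 4 / ((r - l : ℤ) : ℝ) := by
        intro j hj
        rw [Finset.mem_Icc] at hj
        have h2p : (0:ℝ) < (2:ℝ)^(j+1) := by positivity
        have hcj := hcon j hj.1 hj.2
        have hc : (0:ℝ) < ((r - l : ℤ) : ℝ) := by
          have h0 : (0:ℤ) < r - l := by omega
          exact_mod_cast h0
        have hmul : (2:ℝ)^(j+1) * l1Dist (pushforward (g j) p) (pushforward (g j) q) <
            (2:ℝ)^(j+1) * (3 * ε / 4 / (((r - l : ℤ) : ℝ) * (2:ℝ)^(j+1))) :=
          mul_lt_mul_of_pos_left hcj h2p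
        refine lt_of_lt_of_le hmul (le_of_eq ?_)
        rw [div_mul_eq_div_div_swap, ← mul_div_assoc, ← mul_div_assoc,
          mul_div_cancel_left₀ _ (ne_of_gt h2p)]
      calc ∑ j ∈ Finset.Icc l (r-1), (2:ℝ)^(j+1) *
            l1Dist (pushforward (g j) p) (pushforward (g j) q)
          < ∑ _j ∈ Finset.Icc l (r-1), 3 * ε / 4 / ((r - l : ℤ) : ℝ) :=
            Finset.sum_lt_sum_of_nonempty hne hstrict
        _ = ((Finset.Icc l (r-1)).card : ℝ) * (3 * ε / 4 / ((r - l : ℤ) : ℝ)) := by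
            rw [Finset.sum_const, nsmul_eq_mul]
        _ = 3 * ε / 4 := by
            rw [Int.card_Icc]
            have hcard : (((r - 1 + 1 - l).toNat : ℕ) : ℝ) = ((r - l : ℤ) : ℝ) := by
              have h1 : (((r - 1 + 1 - l).toNat : ℕ) : ℤ) = r - l := by
                rw [Int.toNat_of_nonneg (by omega)]; ring
              exact_mod_cast h1
            rw [hcard]
            have hc : ((r - l : ℤ) : ℝ) ≠ 0 := by
              have h0 : (0:ℤ) < r - l := by omega
              have h1 : (0:ℝ) < ((r - l : ℤ) : ℝ) := by exact_mod_cast h0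
              linarith
            rw [mul_comm, div_mul_cancel₀ _ hc]
    linarith
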